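/- Let ν > 0, U_∞ > 0 and τ be real numbers, and let f : ℝ → ℝ be three times continuously differentiable with f'''(t) + τ·f''(t) + f'(t)² − 1 = 0 for all t. Define ψ(x,y) = √(ν U_∞) · f( √(U_∞/ν) · y/x ) + √(ν U_∞) · τ · log x for x > 0, y ∈ ℝ. Then for all x > 0 and all y, ∂_yψ · ∂²_{xy}ψ − ∂_xψ · ∂²_{yy}ψ = ν · ∂³_{yyy}ψ − U_∞² · x^{−3}. -/

import Mathlib

/-- The pseudo-similarity stream function
`ψ(x,y) = √(νU∞) f(√(U∞/ν) y / x) + √(νU∞) τ log x`. -/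
noncomputable def pseudoStream (ν U τ : ℝ) (f : ℝ → ℝ) (x y : ℝ) : ℝ :=
  Real.sqrt (ν * U) * f (Real.sqrt (U / ν) * y / x) + Real.sqrt (ν * U) * τ * Real.log x

/-- If `f''' + τ f'' + (f')² - 1 = 0`, then the pseudo-similarity stream function solves the
boundary-layer equation `ψ_y ψ_xy - ψ_x ψ_yy = ν ψ_yyy - U∞² x⁻³` for all `x > 0`. -/
theorem stmt_15 (ν U τ : ℝ) (hν : 0 < ν) (hU : 0 < U) (f : ℝ → ℝ)
    (hf : ContDiff ℝ 3 f)
    (hode : ∀ t : ℝ,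
      deriv (deriv (deriv f)) t + τ * deriv (deriv f) t + (deriv f t) ^ 2 - 1 = 0) :
    ∀ x : ℝ, 0 < x → ∀ y : ℝ,
      deriv (fun y' => pseudoStream ν U τ f x y') y *
          deriv (fun x' => deriv (fun y' => pseudoStream ν U τ f x' y') y) x -
        deriv (fun x' => pseudoStream ν U τ f x' y) x *
          deriv (deriv (fun y' => pseudoStream ν U τ f x y')) y =
      ν * deriv (deriv (deriv (fun y' => pseudoStream ν U τ f x y'))) y -
        U ^ 2 * x ^ (-3 : ℤ) := by
  set a := Real.sqrt (ν * U) with ha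
  set b := Real.sqrt (U / ν) with hb
  have hb2 : b ^ 2 = U / ν := Real.sq_sqrt (by positivity)
  have hab : a * b = U := by
    rw [ha, hb, ← Real.sqrt_mul (by positivity)]
    rw [show ν * U * (U / ν) = U ^ 2 by field_simp]
    exact Real.sqrt_sq hU.le
  have hfd : Differentiable ℝ f := hf.differentiable (by norm_num)
  have hf1 : ContDiff ℝ 2 (deriv f) :=
    (contDiff_succ_iff_deriv.mp (show ContDiff ℝ (2 + 1) f from hf)).2.2
  have hf1d : Differentiable ℝ (deriv f) := hf1.differentiable (by norm_num)
  have hf2 : ContDiff ℝ 1 (deriv (deriv f)) :=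
    (contDiff_succ_iff_deriv.mp (show ContDiff ℝ (1 + 1) (deriv f) from hf1)).2.2
  have hf2d : Differentiable ℝ (deriv (deriv f)) := hf2.differentiable one_ne_zero
  -- key: deriv in y
  have keyA : ∀ x' y0 : ℝ, deriv (fun y' => pseudoStream ν U τ f x' y') y0
      = a * b / x' * deriv f (b * y0 / x') := by
    intro x' y0
    rcases eq_or_ne x' 0 with h0 | h0
    · simp [pseudoStream, h0, div_zero]
    · have hin : HasDerivAt (fun y' => b * y' / x') (b / x') y0 := by
        simpa using ((hasDerivAt_id y0).const_mul b).div_const x'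
      have : HasDerivAt (fun y' => pseudoStream ν U τ f x' y')
          (a * b / x' * deriv f (b * y0 / x')) y0 := by
        have h1 : HasDerivAt (fun y' => a * f (b * y' / x'))
            (a * (deriv f (b * y0 / x') * (b / x'))) y0 :=
          (((hfd (b * y0 / x')).hasDerivAt.comp y0 hin)).const_mul a
        have h2 := h1.add_const (a * τ * Real.log x')
        exact h2.congr_deriv (by ring)
      exact this.deriv
  intro x hx y
  have hx0 : x ≠ 0 := hx.ne'
  set η := b * y / x with hη
  have hin : HasDerivAt (fun y' => b * y' / x) (b / x) y := by
    simpa using ((hasDerivAt_id y).const_mul b).div_const x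
  -- ψ_y
  have hψy : deriv (fun y' => pseudoStream ν U τ f x y') y = a * b / x * deriv f η :=
    keyA x y
  -- ψ_yy and ψ_yyy
  have hfun : deriv (fun y' => pseudoStream ν U τ f x y')
      = fun y' => a * b / x * deriv f (b * y' / x) := funext fun y0 => keyA x y0
  have hψyy : ∀ y0 : ℝ, deriv (deriv (fun y' => pseudoStream ν U τ f x y')) y0
      = a * b / x * (b / x) * deriv (deriv f) (b * y0 / x) := by
    intro y0
    rw [hfun]
    have hin0 : HasDerivAt (fun y' => b * y' / x) (b / x) y0 := by
      simpa using ((hasDerivAt_id y0).const_mul b).div_const x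
    have h1 : HasDerivAt (fun y' => a * b / x * deriv f (b * y' / x))
        (a * b / x * (b / x) * deriv (deriv f) (b * y0 / x)) y0 := by
      have := (((hf1d (b * y0 / x)).hasDerivAt.comp y0 hin0)).const_mul (a * b / x)
      exact this.congr_deriv (by ring)
    exact h1.deriv
  have hψyyy : deriv (deriv (deriv (fun y' => pseudoStream ν U τ f x y'))) y
      = a * b / x * (b / x) * (b / x) * deriv (deriv (deriv f)) η := by
    have hfun2 : deriv (deriv (fun y' => pseudoStream ν U τ f x y'))
        = fun y0 => a * b / x * (b / x) * deriv (deriv f) (b * y0 / x) := funext hψyy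
    rw [hfun2]
    have h1 : HasDerivAt (fun y0 => a * b / x * (b / x) * deriv (deriv f) (b * y0 / x))
        (a * b / x * (b / x) * (b / x) * deriv (deriv (deriv f)) η) y := by
      have := (((hf2d η).hasDerivAt.comp y hin)).const_mul (a * b / x * (b / x))
      exact this.congr_deriv (by ring)
    exact h1.deriv
  -- ψ_x
  have hinx : HasDerivAt (fun x' => b * y / x') (b * y * (-(x ^ 2)⁻¹)) x := by
    have := (hasDerivAt_inv hx0).const_mul (b * y)
    simpa [div_eq_mul_inv] using this
  have hψx : deriv (fun x' => pseudoStream ν U τ f x' y) x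
      = a * deriv f η * (b * y * (-(x ^ 2)⁻¹)) + a * τ * x⁻¹ := by
    have h1 : HasDerivAt (fun x' => a * f (b * y / x'))
        (a * (deriv f η * (b * y * (-(x ^ 2)⁻¹)))) x :=
      (((hfd η).hasDerivAt.comp x hinx)).const_mul a
    have h2 : HasDerivAt (fun x' => a * τ * Real.log x') (a * τ * x⁻¹) x :=
      (Real.hasDerivAt_log hx0).const_mul (a * τ)
    have : deriv (fun x' => a * f (b * y / x') + a * τ * Real.log x') x = _ := (h1.add h2).deriv
    rw [show (fun x' => pseudoStream ν U τ f x' y)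
        = fun x' => a * f (b * y / x') + a * τ * Real.log x' from rfl, this]
    ring
  -- ψ_xy
  have hψxy : deriv (fun x' => deriv (fun y' => pseudoStream ν U τ f x' y') y) x
      = a * b * (-(x ^ 2)⁻¹) * deriv f η
        + a * b / x * (deriv (deriv f) η * (b * y * (-(x ^ 2)⁻¹))) := by
    have hfun3 : (fun x' => deriv (fun y' => pseudoStream ν U τ f x' y') y)
        = fun x' => a * b / x' * deriv f (b * y / x') := funext fun x' => keyA x' y
    rw [hfun3]
    have hu : HasDerivAt (fun x' : ℝ => a * b / x') (a * b * (-(x ^ 2)⁻¹)) x := by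
      have := (hasDerivAt_inv hx0).const_mul (a * b)
      simpa [div_eq_mul_inv] using this
    have hv : HasDerivAt (fun x' => deriv f (b * y / x'))
        (deriv (deriv f) η * (b * y * (-(x ^ 2)⁻¹))) x :=
      by have := (hf1d η).hasDerivAt.comp x hinx; exact this
    have : deriv (fun x' => a * b / x' * deriv f (b * y / x')) x = _ := (hu.mul hv).deriv
    rw [this, hη]
  -- final computation
  have hbpos : 0 < b := Real.sqrt_pos.mpr (by positivity)
  have hνb : ν * b ^ 2 = U := by rw [hb2]; field_simp
  have hν2 : ν = a / b := by
    have h1 : ν * b * b = a * b := by rw [show ν * b * b = ν * b ^ 2 by ring, hνb, ← hab]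
    have h2 := mul_right_cancel₀ hbpos.ne' h1
    field_simp [hbpos.ne']
    linarith
  have hx3 : (x : ℝ) ^ (-3 : ℤ) = (x ^ 3)⁻¹ := by
    rw [zpow_neg, show ((3:ℤ)) = ((3:ℕ):ℤ) from rfl, zpow_natCast]
  have h3 : deriv (deriv (deriv f)) η = 1 - τ * deriv (deriv f) η - (deriv f η) ^ 2 := by
    have := hode η; linarith
  rw [hψy, hψxy, hψx, hψyy y, hψyyy, h3, hx3, ← hab, hν2, ← hη]
  field_simp
  ring
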